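/- arXiv:2505.16548 — 3 statements merged into one kernel-verified Lean document; each statement's English description precedes it below -/
import Mathlib

section
/- Let Q be an M×M substochastic matrix and R an M×K matrix with [Q R] row-stochastic, and suppose there exist τ ≥ 0 and ε > 0 such that every row of Q^τ R has L1-norm at least ε. Then the affine map F(P) = QP + R on M×K real matrices satisfies ‖F^(τ+1)(P) − F^(τ+1)(P')‖_∞ ≤ (1 − ε)‖P − P'‖_∞ for all M×K matrices P, P', where ‖·‖_∞ denotes the induced ∞-norm (maximum row L1-norm). -/
open Finset Matrix

theorem stmt1 (M K : ℕ) (Q : Matrix (Fin M) (Fin M) ℝ) (R : Matrix (Fin M) (Fin K) ℝ)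
    (hQ0 : ∀ i j, 0 ≤ Q i j) (hR0 : ∀ i k, 0 ≤ R i k)
    (hrow : ∀ i, (∑ j, Q i j) + (∑ k, R i k) = 1)
    (τ : ℕ) (ε : ℝ) (hε : 0 < ε)
    (hτ : ∀ i, ε ≤ ∑ k, |(Q ^ τ * R) i k|)
    (P P' : Matrix (Fin M) (Fin K) ℝ) :
    ∀ i, ∑ k, |((fun X => Q * X + R)^[τ + 1] P - (fun X => Q * X + R)^[τ + 1] P') i k|
      ≤ (1 - ε) * ⨆ i', ∑ k, |(P - P') i' k| := by
  intro i
  set d : Matrix (Fin M) (Fin K) ℝ := P - P' with hd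
  -- nonnegativity of powers
  have hQn0 : ∀ n, ∀ a b, 0 ≤ (Q ^ n) a b := by
    intro n
    induction n with
    | zero => intro a b; simp [Matrix.one_apply]; split <;> norm_num
    | succ n ih =>
        intro a b
        rw [pow_succ, Matrix.mul_apply]
        exact Finset.sum_nonneg fun m _ => mul_nonneg (ih a m) (hQ0 m b)
  have hQrow : ∀ a, ∑ j, Q a j ≤ 1 := by
    intro a
    have := hrow a
    have hr : 0 ≤ ∑ k, R a k := Finset.sum_nonneg fun k _ => hR0 a k
    linarith
  have hsum : ∀ n, ∀ a, ∑ j, (Q ^ n) a j ≤ 1 := by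
    intro n
    induction n with
    | zero => intro a; simp [Matrix.one_apply]
    | succ n ih =>
        intro a
        have h1 : ∑ j, (Q ^ (n + 1)) a j = ∑ m, (Q ^ n) a m * ∑ j, Q m j := by
          simp only [pow_succ, Matrix.mul_apply]
          rw [Finset.sum_comm]
          simp [Finset.mul_sum]
        rw [h1]
        calc ∑ m, (Q ^ n) a m * ∑ j, Q m j ≤ ∑ m, (Q ^ n) a m * 1 :=
              Finset.sum_le_sum fun m _ =>
                mul_le_mul_of_nonneg_left (hQrow m) (hQn0 n a m)
          _ ≤ 1 := by simpa using ih a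
  -- key bound on row sums of Q^(τ+1)
  have hkey : ∀ a, ∑ j, (Q ^ (τ + 1)) a j ≤ 1 - ε := by
    intro a
    have h1 : ∑ j, (Q ^ (τ + 1)) a j = ∑ m, (Q ^ τ) a m * ∑ j, Q m j := by
      simp only [pow_succ, Matrix.mul_apply]
      rw [Finset.sum_comm]
      simp [Finset.mul_sum]
    have h2 : ∑ m, (Q ^ τ) a m * ∑ j, Q m j
        = (∑ m, (Q ^ τ) a m) - ∑ k, (Q ^ τ * R) a k := by
      have : ∀ m, (Q ^ τ) a m * ∑ j, Q m j
          = (Q ^ τ) a m - ∑ k, (Q ^ τ) a m * R m k := by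
        intro m
        have hm : ∑ j, Q m j = 1 - ∑ k, R m k := by linarith [hrow m]
        rw [hm, mul_sub, mul_one, Finset.mul_sum]
      rw [Finset.sum_congr rfl fun m _ => this m, Finset.sum_sub_distrib]
      congr 1
      rw [Finset.sum_comm]
      simp [Matrix.mul_apply]
    have h3 : ε ≤ ∑ k, (Q ^ τ * R) a k := by
      have := hτ a
      have habs : ∀ k, |(Q ^ τ * R) a k| = (Q ^ τ * R) a k := by
        intro k
        refine abs_of_nonneg ?_
        rw [Matrix.mul_apply]
        exact Finset.sum_nonneg fun m _ => mul_nonneg (hQn0 τ a m) (hR0 m k)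
      rwa [Finset.sum_congr rfl fun k _ => habs k] at this
    have h4 := hsum τ a
    rw [h1, h2]
    linarith
  -- difference of iterates
  have hdiff : ∀ n, (fun X => Q * X + R)^[n] P - (fun X => Q * X + R)^[n] P'
      = Q ^ n * d := by
    intro n
    induction n with
    | zero => simp [hd]
    | succ n ih =>
        rw [Function.iterate_succ_apply', Function.iterate_succ_apply']
        have : Q * ((fun X => Q * X + R)^[n] P) + R
            - (Q * ((fun X => Q * X + R)^[n] P') + R)
            = Q * ((fun X => Q * X + R)^[n] P - (fun X => Q * X + R)^[n] P') := by
          rw [Matrix.mul_sub]; abel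
        rw [this, ih, ← Matrix.mul_assoc, ← pow_succ']
  rw [hdiff (τ + 1)]
  set S : ℝ := ⨆ i', ∑ k, |d i' k| with hS
  have hbdd : BddAbove (Set.range fun i' => ∑ k, |d i' k|) :=
    Set.Finite.bddAbove (Set.finite_range _)
  have hle : ∀ j, ∑ k, |d j k| ≤ S := fun j => le_ciSup hbdd j
  have hS0 : 0 ≤ S :=
    le_trans (Finset.sum_nonneg fun k _ => abs_nonneg _) (hle i)
  calc ∑ k, |(Q ^ (τ + 1) * d) i k|
      ≤ ∑ k, ∑ j, (Q ^ (τ + 1)) i j * |d j k| := by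
        refine Finset.sum_le_sum fun k _ => ?_
        rw [Matrix.mul_apply]
        refine le_trans (Finset.abs_sum_le_sum_abs _ _) (Finset.sum_le_sum fun j _ => ?_)
        rw [abs_mul, abs_of_nonneg (hQn0 (τ + 1) i j)]
    _ = ∑ j, (Q ^ (τ + 1)) i j * ∑ k, |d j k| := by
        rw [Finset.sum_comm]; simp [Finset.mul_sum]
    _ ≤ ∑ j, (Q ^ (τ + 1)) i j * S :=
        Finset.sum_le_sum fun j _ =>
          mul_le_mul_of_nonneg_left (hle j) (hQn0 (τ + 1) i j)
    _ = (∑ j, (Q ^ (τ + 1)) i j) * S := by rw [Finset.sum_mul]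
    _ ≤ (1 - ε) * S := mul_le_mul_of_nonneg_right (hkey i) hS0
end

section
/- Let Q be an M×M substochastic matrix and R an M×K matrix with [Q R] row-stochastic, and suppose there exist τ ≥ 0 and ε > 0 such that every row of Q^τ R has L1-norm at least ε. Then the map F(P) = QP + R on M×K real matrices has a unique fixed point P*, and for any initial matrix P₀, the iterates P_{i+1} = Q P_i + R converge to P* as i → ∞. -/
open Finset Matrix

section Aux

attribute [local instance] Matrix.linftyOpNormedAddCommGroup Matrix.linftyOpNormedSpace

-- norm bounded by uniform row-sum bound
lemma aux_norm_le {m n : Type*} [Fintype m] [Fintype n] (A : Matrix m n ℝ) (r : ℝ)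
    (hr : 0 ≤ r) (h : ∀ i, ∑ j, |A i j| ≤ r) : ‖A‖ ≤ r := by
  rw [Matrix.linfty_opNorm_def]
  have key : (Finset.univ.sup fun i => ∑ j, ‖A i j‖₊) ≤ (⟨r, hr⟩ : NNReal) := by
    apply Finset.sup_le
    intro i _
    refine NNReal.coe_le_coe.mp ?_
    push_cast
    have hi := h i
    simp only [Real.norm_eq_abs, coe_nnnorm] at hi ⊢
    exact hi
  exact_mod_cast key

lemma aux_entry_le {m n : Type*} [Fintype m] [Fintype n] (A : Matrix m n ℝ) (i : m) (k : n) :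
    |A i k| ≤ ‖A‖ := by
  rw [Matrix.linfty_opNorm_def]
  have h1 : (|A i k| : ℝ) ≤ ((∑ j, ‖A i j‖₊ : NNReal) : ℝ) := by
    push_cast
    simp only [coe_nnnorm, Real.norm_eq_abs]
    exact Finset.single_le_sum (f := fun j => |A i j|) (fun j _ => abs_nonneg _)
      (Finset.mem_univ k)
  refine h1.trans ?_
  have h2 := Finset.le_sup (f := fun i => ∑ j, ‖A i j‖₊) (Finset.mem_univ i)
  exact_mod_cast NNReal.coe_le_coe.mpr h2

lemma aux_main (M K : ℕ) (Q : Matrix (Fin M) (Fin M) ℝ) (R : Matrix (Fin M) (Fin K) ℝ)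
    (hQ0 : ∀ i j, 0 ≤ Q i j) (hR0 : ∀ i k, 0 ≤ R i k)
    (hrow : ∀ i, (∑ j, Q i j) + (∑ k, R i k) = 1)
    (τ : ℕ) (ε : ℝ) (hε : 0 < ε)
    (hτ : ∀ i, ε ≤ ∑ k, |(Q ^ τ * R) i k|) :
    ∃ Pstar : Matrix (Fin M) (Fin K) ℝ,
      (Q * Pstar + R = Pstar) ∧
      (∀ P : Matrix (Fin M) (Fin K) ℝ, Q * P + R = P → P = Pstar) ∧
      (∀ (P0 : Matrix (Fin M) (Fin K) ℝ) (i : Fin M) (k : Fin K),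
        Filter.Tendsto (fun n => ((fun X => Q * X + R)^[n] P0) i k) Filter.atTop
          (nhds (Pstar i k))) := by
  rcases Nat.eq_zero_or_pos M with hM | hM
  · -- trivial case: no rows
    subst hM
    haveI : IsEmpty (Fin 0) := inferInstance
    haveI : Subsingleton (Matrix (Fin 0) (Fin K) ℝ) :=
      ⟨fun A B => funext fun i => i.elim0⟩
    exact ⟨0, Subsingleton.elim _ _, fun P _ => Subsingleton.elim _ _,
      fun P0 i k => i.elim0⟩
  set F : Matrix (Fin M) (Fin K) ℝ → Matrix (Fin M) (Fin K) ℝ := fun X => Q * X + R with hF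
  -- entries of Q^n are nonnegative
  have hpow0 : ∀ (n : ℕ) i j, 0 ≤ (Q ^ n) i j := by
    intro n
    induction n with
    | zero => intro i j; simp [Matrix.one_apply]; positivity
    | succ n ih =>
      intro i j
      rw [pow_succ, Matrix.mul_apply]
      exact Finset.sum_nonneg fun l _ => mul_nonneg (ih i l) (hQ0 l j)
  -- row sums of Q are ≤ 1
  have hQrow : ∀ i, ∑ j, Q i j ≤ 1 := by
    intro i
    have := hrow i
    have h2 : 0 ≤ ∑ k, R i k := Finset.sum_nonneg fun k _ => hR0 i k
    linarith
  -- row sums of Q^n are ≤ 1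
  have hpowrow : ∀ (n : ℕ) i, ∑ j, (Q ^ n) i j ≤ 1 := by
    intro n
    induction n with
    | zero => intro i; simp [Matrix.one_apply]
    | succ n ih =>
      intro i
      calc ∑ j, (Q ^ (n+1)) i j = ∑ l, (Q ^ n) i l * ∑ j, Q l j := by
            simp only [pow_succ, Matrix.mul_apply]
            rw [Finset.sum_comm]
            simp [Finset.mul_sum]
      _ ≤ ∑ l, (Q ^ n) i l * 1 :=
            Finset.sum_le_sum fun l _ => mul_le_mul_of_nonneg_left (hQrow l) (hpow0 n i l)
      _ ≤ 1 := by simpa using ih i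
  have hQnorm : ∀ n : ℕ, ‖Q ^ n‖ ≤ 1 := by
    intro n
    refine aux_norm_le _ _ zero_le_one fun i => ?_
    calc ∑ j, |(Q ^ n) i j| = ∑ j, (Q ^ n) i j :=
          Finset.sum_congr rfl fun j _ => abs_of_nonneg (hpow0 n i j)
    _ ≤ 1 := hpowrow n i
  -- key bound: row sums of Q^(τ+1) ≤ 1 - ε
  have hkeyrow : ∀ i, ∑ j, |(Q ^ (τ+1)) i j| ≤ 1 - ε := by
    intro i
    have h1 : ∑ j, (Q ^ (τ+1)) i j
        = ∑ l, (Q ^ τ) i l * ∑ j, Q l j := by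
      simp only [pow_succ, Matrix.mul_apply]
      rw [Finset.sum_comm]
      simp [Finset.mul_sum]
    have h2 : ∑ k, |(Q ^ τ * R) i k| = ∑ l, (Q ^ τ) i l * ∑ k, R l k := by
      have : ∀ k, |(Q ^ τ * R) i k| = (Q ^ τ * R) i k := fun k =>
        abs_of_nonneg (by
          rw [Matrix.mul_apply]
          exact Finset.sum_nonneg fun l _ => mul_nonneg (hpow0 τ i l) (hR0 l k))
      calc ∑ k, |(Q ^ τ * R) i k| = ∑ k, (Q ^ τ * R) i k :=
            Finset.sum_congr rfl fun k _ => this k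
      _ = ∑ l, (Q ^ τ) i l * ∑ k, R l k := by
            simp only [Matrix.mul_apply]
            rw [Finset.sum_comm]
            simp [Finset.mul_sum]
    have h3 : ∑ j, (Q ^ (τ+1)) i j = (∑ l, (Q ^ τ) i l) - ∑ k, |(Q ^ τ * R) i k| := by
      rw [h1, h2, ← Finset.sum_sub_distrib]
      refine Finset.sum_congr rfl fun l _ => ?_
      have hl := hrow l
      have : ∑ j, Q l j = 1 - ∑ k, R l k := by linarith
      rw [this, mul_sub, mul_one]
    calc ∑ j, |(Q ^ (τ+1)) i j| = ∑ j, (Q ^ (τ+1)) i j :=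
          Finset.sum_congr rfl fun j _ => abs_of_nonneg (hpow0 _ i j)
    _ = (∑ l, (Q ^ τ) i l) - ∑ k, |(Q ^ τ * R) i k| := h3
    _ ≤ 1 - ε := sub_le_sub (hpowrow τ i) (hτ i)
  have hε1 : 0 ≤ 1 - ε := by
    obtain ⟨i⟩ : Nonempty (Fin M) := Fin.pos_iff_nonempty.mp hM
    have h0 : (0:ℝ) ≤ ∑ j, |(Q ^ (τ+1)) i j| :=
      Finset.sum_nonneg fun j _ => abs_nonneg _
    linarith [hkeyrow i]
  have hkey : ‖Q ^ (τ+1)‖ ≤ 1 - ε := aux_norm_le _ _ hε1 hkeyrow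
  -- iterate difference formula
  have hiter : ∀ (n : ℕ) (X Y : Matrix (Fin M) (Fin K) ℝ),
      F^[n] X - F^[n] Y = Q ^ n * (X - Y) := by
    intro n
    induction n with
    | zero => intro X Y; simp
    | succ n ih =>
      intro X Y
      rw [Function.iterate_succ_apply', Function.iterate_succ_apply', hF]
      simp only
      rw [add_sub_add_right_eq_sub, ← Matrix.mul_sub, ih, ← Matrix.mul_assoc,
        ← pow_succ']
  -- contraction
  haveI : CompleteSpace (Matrix (Fin M) (Fin K) ℝ) := FiniteDimensional.complete ℝ _
  set c : ℝ := 1 - ε with hc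
  have hcontr : ContractingWith (Real.toNNReal c) F^[τ+1] := by
    constructor
    · exact_mod_cast Real.toNNReal_lt_one.mpr (by linarith)
    · apply LipschitzWith.of_dist_le_mul
      intro X Y
      rw [dist_eq_norm, dist_eq_norm, hiter]
      calc ‖Q ^ (τ+1) * (X - Y)‖ ≤ ‖Q ^ (τ+1)‖ * ‖X - Y‖ := Matrix.linfty_opNorm_mul _ _
      _ ≤ c * ‖X - Y‖ := mul_le_mul_of_nonneg_right hkey (norm_nonneg _)
      _ = (Real.toNNReal c : ℝ) * ‖X - Y‖ := by rw [Real.coe_toNNReal c hε1]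
  set Pstar := ContractingWith.fixedPoint F^[τ+1] hcontr with hPdef
  have hPfix : F^[τ+1] Pstar = Pstar := hcontr.fixedPoint_isFixedPt
  have hcomm : F^[τ+1] (F Pstar) = F Pstar := by
    rw [← Function.iterate_succ_apply, Function.iterate_succ_apply', hPfix]
  have hFfix : F Pstar = Pstar := hcontr.fixedPoint_unique hcomm
  have huniq : ∀ P, Q * P + R = P → P = Pstar := by
    intro P hP
    have hP' : Function.IsFixedPt F P := hP
    exact hcontr.fixedPoint_unique (hP'.iterate (τ+1))
  refine ⟨Pstar, hFfix, huniq, ?_⟩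
  -- convergence
  have hQc : ∀ q : ℕ, ‖Q ^ ((τ+1) * q)‖ ≤ c ^ q := by
    intro q
    induction q with
    | zero => simpa only [Nat.mul_zero, pow_zero] using hQnorm 0
    | succ q ih =>
      calc ‖Q ^ ((τ+1) * (q+1))‖ = ‖Q ^ ((τ+1) * q) * Q ^ (τ+1)‖ := by
            rw [← pow_add]; ring_nf
      _ ≤ ‖Q ^ ((τ+1) * q)‖ * ‖Q ^ (τ+1)‖ := Matrix.linfty_opNorm_mul _ _
      _ ≤ c ^ q * c := mul_le_mul ih hkey (norm_nonneg _) (pow_nonneg hε1 q)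
      _ = c ^ (q+1) := by ring
  have hQn : ∀ n : ℕ, ‖Q ^ n‖ ≤ c ^ (n / (τ+1)) := by
    intro n
    have hmod : n = (τ+1) * (n / (τ+1)) + n % (τ+1) := (Nat.div_add_mod n (τ+1)).symm
    calc ‖Q ^ n‖ = ‖Q ^ ((τ+1) * (n / (τ+1))) * Q ^ (n % (τ+1))‖ := by
          rw [← pow_add, ← hmod]
    _ ≤ ‖Q ^ ((τ+1) * (n / (τ+1)))‖ * ‖Q ^ (n % (τ+1))‖ := Matrix.linfty_opNorm_mul _ _
    _ ≤ c ^ (n / (τ+1)) * 1 :=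
          mul_le_mul (hQc _) (hQnorm _) (norm_nonneg _) (pow_nonneg hε1 _)
    _ = c ^ (n / (τ+1)) := mul_one _
  intro P0 i k
  rw [tendsto_iff_norm_sub_tendsto_zero]
  have hbound : ∀ n : ℕ, ‖(F^[n] P0) i k - Pstar i k‖ ≤ c ^ (n / (τ+1)) * ‖P0 - Pstar‖ := by
    intro n
    have h1 : (F^[n] P0) i k - Pstar i k = (F^[n] P0 - F^[n] Pstar) i k := by
      rw [Function.IsFixedPt.iterate hFfix n]
      rfl
    rw [Real.norm_eq_abs, h1, hiter]
    calc |(Q ^ n * (P0 - Pstar)) i k| ≤ ‖Q ^ n * (P0 - Pstar)‖ := aux_entry_le _ _ _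
    _ ≤ ‖Q ^ n‖ * ‖P0 - Pstar‖ := Matrix.linfty_opNorm_mul _ _
    _ ≤ c ^ (n / (τ+1)) * ‖P0 - Pstar‖ :=
          mul_le_mul_of_nonneg_right (hQn n) (norm_nonneg _)
  refine squeeze_zero (fun n => norm_nonneg _) hbound ?_
  have hdiv : Filter.Tendsto (fun n : ℕ => n / (τ+1)) Filter.atTop Filter.atTop := by
    apply Filter.tendsto_atTop_atTop.mpr
    intro b
    exact ⟨(τ+1) * b, fun n hn => (Nat.le_div_iff_mul_le (Nat.succ_pos τ)).mpr
      (le_of_eq_of_le (Nat.mul_comm b (τ+1)) hn)⟩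
  have : Filter.Tendsto (fun n : ℕ => c ^ (n / (τ+1))) Filter.atTop (nhds 0) :=
    (tendsto_pow_atTop_nhds_zero_of_lt_one hε1 (by linarith)).comp hdiv
  simpa using this.mul_const ‖P0 - Pstar‖

end Aux

theorem stmt2 (M K : ℕ) (Q : Matrix (Fin M) (Fin M) ℝ) (R : Matrix (Fin M) (Fin K) ℝ)
    (hQ0 : ∀ i j, 0 ≤ Q i j) (hR0 : ∀ i k, 0 ≤ R i k)
    (hrow : ∀ i, (∑ j, Q i j) + (∑ k, R i k) = 1)
    (τ : ℕ) (ε : ℝ) (hε : 0 < ε)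
    (hτ : ∀ i, ε ≤ ∑ k, |(Q ^ τ * R) i k|) :
    ∃ Pstar : Matrix (Fin M) (Fin K) ℝ,
      (Q * Pstar + R = Pstar) ∧
      (∀ P : Matrix (Fin M) (Fin K) ℝ, Q * P + R = P → P = Pstar) ∧
      (∀ P0 : Matrix (Fin M) (Fin K) ℝ,
        Filter.Tendsto (fun i => (fun X => Q * X + R)^[i] P0) Filter.atTop (nhds Pstar)) := by
  obtain ⟨Pstar, h1, h2, h3⟩ := aux_main M K Q R hQ0 hR0 hrow τ ε hε hτ
  refine ⟨Pstar, h1, h2, fun P0 => ?_⟩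
  rw [show (nhds Pstar : Filter (Matrix (Fin M) (Fin K) ℝ)) = nhds Pstar from rfl]
  apply tendsto_pi_nhds.mpr
  intro i
  apply tendsto_pi_nhds.mpr
  intro k
  exact h3 P0 i k
end

section
/- Tabular TC iteration equals fixed-point iteration on the empirical chain: with tabular parameters Θ ∈ R^{M×K} (rows are probability vectors with positive entries) and empirical transition matrices Q̂, R̂ derived from a dataset of trajectories, any minimizer over row-stochastic Θ of the total TC loss Σ_{(s,y)∈B} H[δ_y ‖ θ_s] + Σ_{(s,s')∈A} H[θ^{(i)}_{s'} ‖ θ_s] satisfies Θ = Q̂ Θ^{(i)} + R̂, whenever every transient state appears in the data and Q̂ Θ^{(i)} + R̂ has strictly positive entries. -/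
open Finset

/-- Cross-entropy of `q` relative to target `p`. -/
noncomputable def crossEnt {K : ℕ} (p q : Fin K → ℝ) : ℝ := -∑ k, p k * Real.log (q k)


lemma count_map_fst' {α β : Type*} [DecidableEq α] [DecidableEq β] [Fintype β]
    (s : Multiset (α × β)) (m : α) :
    (s.map Prod.fst).count m = ∑ b : β, s.count (m, b) := by
  induction s using Multiset.induction with
  | empty => simp
  | cons a s ih =>
    simp [Multiset.count_cons, ih, Finset.sum_add_distrib, Prod.ext_iff, ite_and]

lemma multiset_map_sum_count' {α : Type*} [Fintype α] [DecidableEq α]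
    (s : Multiset α) (f : α → ℝ) :
    (s.map f).sum = ∑ a, (s.count a : ℝ) * f a := by
  induction s using Multiset.induction with
  | empty => simp
  | cons a s ih =>
    simp [Multiset.count_cons, ih, Finset.sum_add_distrib, add_mul, Finset.sum_ite_eq, add_comm]

lemma gibbs_lt' {K : ℕ} (p q : Fin K → ℝ) (hp : ∀ k, 0 < p k) (hq : ∀ k, 0 < q k)
    (hps : ∑ k, p k = 1) (hqs : ∑ k, q k = 1) (hne : q ≠ p) :
    crossEnt p p < crossEnt p q := by
  obtain ⟨k0, hk0⟩ : ∃ k, q k ≠ p k := by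
    by_contra h; push_neg at h; exact hne (funext h)
  have key : ∑ k, p k * Real.log (q k / p k) < 0 := by
    have hterm : ∀ k ∈ Finset.univ, p k * Real.log (q k / p k) ≤ q k - p k := by
      intro k _
      have h1 : Real.log (q k / p k) ≤ q k / p k - 1 :=
        Real.log_le_sub_one_of_pos (div_pos (hq k) (hp k))
      have := mul_le_mul_of_nonneg_left h1 (hp k).le
      calc p k * Real.log (q k / p k) ≤ p k * (q k / p k - 1) := this
        _ = q k - p k := by
            rw [mul_sub, mul_div_cancel₀ _ (hp k).ne', mul_one]
    have hstrict : p k0 * Real.log (q k0 / p k0) < q k0 - p k0 := by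
      have h1 : Real.log (q k0 / p k0) < q k0 / p k0 - 1 :=
        Real.log_lt_sub_one_of_pos (div_pos (hq k0) (hp k0))
          (by
            intro h
            rw [div_eq_one_iff_eq (hp k0).ne'] at h
            exact hk0 h)
      have := mul_lt_mul_of_pos_left h1 (hp k0)
      calc p k0 * Real.log (q k0 / p k0) < p k0 * (q k0 / p k0 - 1) := this
        _ = q k0 - p k0 := by
            rw [mul_sub, mul_div_cancel₀ _ (hp k0).ne', mul_one]
    have := Finset.sum_lt_sum (fun k hk => hterm k hk) ⟨k0, Finset.mem_univ k0, hstrict⟩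
    have hz : ∑ k, (q k - p k) = 0 := by rw [Finset.sum_sub_distrib, hps, hqs]; ring
    linarith
  have hexp : crossEnt p q - crossEnt p p = -∑ k, p k * Real.log (q k / p k) := by
    unfold crossEnt
    have h2 : ∑ k, p k * Real.log (q k / p k)
        = ∑ k, (p k * Real.log (q k) - p k * Real.log (p k)) :=
      Finset.sum_congr rfl (fun k _ => by rw [Real.log_div (hq k).ne' (hp k).ne']; ring)
    rw [h2, Finset.sum_sub_distrib]; ring
  linarith

lemma gibbs_le' {K : ℕ} (p q : Fin K → ℝ) (hp : ∀ k, 0 < p k) (hq : ∀ k, 0 < q k)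
    (hps : ∑ k, p k = 1) (hqs : ∑ k, q k = 1) :
    crossEnt p p ≤ crossEnt p q := by
  rcases eq_or_ne q p with h | h
  · rw [h]
  · exact (gibbs_lt' p q hp hq hps hqs h).le


theorem stmt12 (M K : ℕ)
    (A : Multiset (Fin M × Fin M)) (B : Multiset (Fin M × Fin K))
    (Θi Θ0 : Matrix (Fin M) (Fin K) ℝ)
    (hΘi : ∀ m, (∀ k, 0 ≤ Θi m k) ∧ ∑ k, Θi m k = 1)
    (c : Fin M → ℕ)
    (hc : ∀ m, c m = (A.map Prod.fst).count m + (B.map Prod.fst).count m)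
    (hcpos : ∀ m, 0 < c m)
    (Qhat : Matrix (Fin M) (Fin M) ℝ)
    (hQhat : ∀ m m', Qhat m m' = (A.count (m, m') : ℝ) / (c m : ℝ))
    (Rhat : Matrix (Fin M) (Fin K) ℝ)
    (hRhat : ∀ m k, Rhat m k = (B.count (m, k) : ℝ) / (c m : ℝ))
    (hpos : ∀ m k, 0 < (Qhat * Θi + Rhat) m k)
    (hΘ0 : ∀ m, (∀ k, 0 < Θ0 m k) ∧ ∑ k, Θ0 m k = 1)
    (hmin : ∀ Θ : Matrix (Fin M) (Fin K) ℝ,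
      (∀ m, (∀ k, 0 < Θ m k) ∧ ∑ k, Θ m k = 1) →
      ((B.map fun sy => crossEnt (fun k => if k = sy.2 then (1:ℝ) else 0) (Θ0 sy.1)).sum
          + (A.map fun ss => crossEnt (Θi ss.2) (Θ0 ss.1)).sum)
        ≤ ((B.map fun sy => crossEnt (fun k => if k = sy.2 then (1:ℝ) else 0) (Θ sy.1)).sum
          + (A.map fun ss => crossEnt (Θi ss.2) (Θ ss.1)).sum)) :
    Θ0 = Qhat * Θi + Rhat := by
  set T := Qhat * Θi + Rhat with hTdef
  have hcne : ∀ m, (c m : ℝ) ≠ 0 := fun m => Nat.cast_ne_zero.mpr (hcpos m).ne'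
  have hmul : ∀ m k, (c m : ℝ) * T m k
      = (∑ m', (A.count (m, m') : ℝ) * Θi m' k) + (B.count (m, k) : ℝ) := by
    intro m k
    have hT : T m k
        = ((∑ m', (A.count (m, m') : ℝ) * Θi m' k) + (B.count (m, k) : ℝ)) / (c m : ℝ) := by
      simp only [hTdef, Matrix.add_apply, Matrix.mul_apply, hQhat, hRhat]
      rw [add_div, Finset.sum_div]
      congr 1
      exact Finset.sum_congr rfl fun m' _ => by rw [div_mul_eq_mul_div]
    rw [hT, mul_div_cancel₀ _ (hcne m)]
  have hTsum : ∀ m, ∑ k, T m k = 1 := by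
    intro m
    have h1 : (c m : ℝ) * ∑ k, T m k = (c m : ℝ) := by
      rw [Finset.mul_sum]
      rw [Finset.sum_congr rfl fun k _ => hmul m k, Finset.sum_add_distrib, Finset.sum_comm]
      have h2 : ∑ m', ∑ k, (A.count (m, m') : ℝ) * Θi m' k
          = ∑ m', (A.count (m, m') : ℝ) := by
        refine Finset.sum_congr rfl fun m' _ => ?_
        rw [← Finset.mul_sum, (hΘi m').2, mul_one]
      rw [h2]
      have h3 := hc m
      rw [count_map_fst' A m, count_map_fst' B m] at h3
      rw [h3]
      push_cast
      ring
    exact mul_left_cancel₀ (hcne m) (h1.trans (mul_one _).symm)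
  have hTprop : ∀ m, (∀ k, 0 < T m k) ∧ ∑ k, T m k = 1 :=
    fun m => ⟨fun k => hpos m k, hTsum m⟩
  have hLoss : ∀ Θ : Matrix (Fin M) (Fin K) ℝ,
      ((B.map fun sy => crossEnt (fun k => if k = sy.2 then (1:ℝ) else 0) (Θ sy.1)).sum
        + (A.map fun ss => crossEnt (Θi ss.2) (Θ ss.1)).sum)
      = ∑ m, (c m : ℝ) * crossEnt (T m) (Θ m) := by
    intro Θ
    rw [multiset_map_sum_count' B, multiset_map_sum_count' A,
        Fintype.sum_prod_type, Fintype.sum_prod_type, ← Finset.sum_add_distrib]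
    refine Finset.sum_congr rfl fun m _ => ?_
    have hce : ∀ y : Fin K,
        crossEnt (fun k => if k = y then (1:ℝ) else 0) (Θ m) = -Real.log (Θ m y) := by
      intro y; unfold crossEnt; simp
    have key : (c m : ℝ) * ∑ k, T m k * Real.log (Θ m k)
        = (∑ m', (A.count (m, m') : ℝ) * ∑ k, Θi m' k * Real.log (Θ m k))
          + ∑ k, (B.count (m, k) : ℝ) * Real.log (Θ m k) := by
      rw [Finset.mul_sum]
      calc ∑ k, (c m : ℝ) * (T m k * Real.log (Θ m k))
          = ∑ k, ((∑ m', (A.count (m, m') : ℝ) * Θi m' k) + (B.count (m, k) : ℝ))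
              * Real.log (Θ m k) := by
            refine Finset.sum_congr rfl fun k _ => ?_
            rw [← mul_assoc, hmul m k]
        _ = ∑ k, ∑ m', (A.count (m, m') : ℝ) * Θi m' k * Real.log (Θ m k)
              + ∑ k, (B.count (m, k) : ℝ) * Real.log (Θ m k) := by
            rw [← Finset.sum_add_distrib]
            refine Finset.sum_congr rfl fun k _ => ?_
            rw [add_mul, Finset.sum_mul]
        _ = _ := by
            congr 1
            rw [Finset.sum_comm]
            refine Finset.sum_congr rfl fun m' _ => ?_
            rw [Finset.mul_sum]
            exact Finset.sum_congr rfl fun k _ => by ring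
    simp only [hce]
    unfold crossEnt
    simp only [mul_neg]
    rw [Finset.sum_neg_distrib, Finset.sum_neg_distrib]
    linarith [key]
  have hineq := hmin T hTprop
  rw [hLoss Θ0, hLoss T] at hineq
  have hle : ∀ m ∈ Finset.univ, (c m : ℝ) * crossEnt (T m) (T m)
      ≤ (c m : ℝ) * crossEnt (T m) (Θ0 m) :=
    fun m _ => mul_le_mul_of_nonneg_left
      (gibbs_le' (T m) (Θ0 m) (fun k => hpos m k) (hΘ0 m).1 (hTsum m) (hΘ0 m).2)
      (Nat.cast_nonneg _)
  by_contra hne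
  have hex : ∃ m, Θ0 m ≠ T m := by
    by_contra h; push_neg at h
    exact hne (Matrix.ext fun m k => congrFun (h m) k)
  obtain ⟨m0, hm0⟩ := hex
  have hstrict : (c m0 : ℝ) * crossEnt (T m0) (T m0)
      < (c m0 : ℝ) * crossEnt (T m0) (Θ0 m0) :=
    mul_lt_mul_of_pos_left
      (gibbs_lt' (T m0) (Θ0 m0) (fun k => hpos m0 k) (hΘ0 m0).1 (hTsum m0) (hΘ0 m0).2 hm0)
      (by exact_mod_cast hcpos m0)
  have hlt := Finset.sum_lt_sum hle ⟨m0, Finset.mem_univ m0, hstrict⟩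
  linarith
end
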